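/- Let n ≥ 3 be odd. The number of ordered triples (i,j,k) with 1 ≤ i < j < k ≤ n such that j-i, k-j, and (n+i)-k are all strictly less than n/2 equals (1/4)·C(n+1,3). -/

import Mathlib

open Finset

lemma sq_sum_choose (m : ℕ) : 4 * ∑ c ∈ Icc 1 m, c * c = (2*m+2).choose 3 := by
  induction m with
  | zero => decide
  | succ m ih =>
    rw [Finset.sum_Icc_succ_top (by omega)]
    have h1 : 2*(m+1)+2 = (2*m+3)+1 := by ring
    have h2 : 2*m+3 = (2*m+2)+1 := by ring
    have c1 : (2*m+3).choose 2 = (2*m+3)*(m+1) := by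
      rw [Nat.choose_two_right, show 2*m+3-1 = 2*(m+1) from by omega,
        show (2*m+3)*(2*(m+1)) = ((2*m+3)*(m+1))*2 from by ring]
      exact Nat.mul_div_cancel _ (by norm_num)
    have c2 : (2*m+2).choose 2 = (2*m+1)*(m+1) := by
      rw [Nat.choose_two_right, show 2*m+2-1 = 2*m+1 from by omega,
        show (2*m+2)*(2*m+1) = ((2*m+1)*(m+1))*2 from by ring]
      exact Nat.mul_div_cancel _ (by norm_num)
    rw [h1, Nat.choose_succ_succ' (2*m+3) 2, h2, Nat.choose_succ_succ' (2*m+2) 2,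
      c1, c2, ← ih]
    ring

/-- For odd `n ≥ 3`, the number of triples `(i,j,k)` with `1 ≤ i < j < k ≤ n` whose
three cyclic gaps `j-i`, `k-j`, `n+i-k` are all less than `n/2` is `(1/4)·C(n+1,3)`. -/
theorem stmt_6 (n : ℕ) (hn : 3 ≤ n) (hodd : Odd n) :
    4 * ((Finset.Icc 1 n ×ˢ Finset.Icc 1 n ×ˢ Finset.Icc 1 n).filter
        (fun t : ℕ × ℕ × ℕ => t.1 < t.2.1 ∧ t.2.1 < t.2.2 ∧
          2 * (t.2.1 - t.1) < n ∧ 2 * (t.2.2 - t.2.1) < n ∧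
          2 * (n + t.1 - t.2.2) < n)).card = (n + 1).choose 3 := by
  obtain ⟨m, hm⟩ := hodd
  have hm1 : 1 ≤ m := by omega
  have hcard : ((Finset.Icc 1 n ×ˢ Finset.Icc 1 n ×ˢ Finset.Icc 1 n).filter
        (fun t : ℕ × ℕ × ℕ => t.1 < t.2.1 ∧ t.2.1 < t.2.2 ∧
          2 * (t.2.1 - t.1) < n ∧ 2 * (t.2.2 - t.2.1) < n ∧
          2 * (n + t.1 - t.2.2) < n)).card
      = ((Icc 1 m).sigma (fun c => Icc 1 c ×ˢ Icc 1 c)).card := by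
    apply Finset.card_nbij'
      (fun t : ℕ × ℕ × ℕ => (⟨n + t.1 - t.2.2, (t.2.1 - t.1 + (n + t.1 - t.2.2) - m, t.1)⟩ :
        (_ : ℕ) × ℕ × ℕ))
      (fun s : (_ : ℕ) × ℕ × ℕ => (s.2.2, s.2.2 + (m - s.1) + s.2.1, s.2.2 + (n - s.1)))
    · rintro ⟨i, j, k⟩ ht
      simp only [Finset.mem_coe, Finset.mem_filter, Finset.mem_product, Finset.mem_Icc] at ht
      simp only [Finset.mem_coe, Finset.mem_sigma, Finset.mem_product, Finset.mem_Icc]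
      omega
    · rintro ⟨c, x, i⟩ hs
      simp only [Finset.mem_coe, Finset.mem_sigma, Finset.mem_product, Finset.mem_Icc] at hs
      simp only [Finset.mem_coe, Finset.mem_filter, Finset.mem_product, Finset.mem_Icc]
      omega
    · rintro ⟨i, j, k⟩ ht
      simp only [Finset.mem_coe, Finset.mem_filter, Finset.mem_product, Finset.mem_Icc] at ht
      simp only [Prod.mk.injEq]
      exact ⟨trivial, by omega, by omega⟩
    · rintro ⟨c, x, i⟩ hs
      simp only [Finset.mem_coe, Finset.mem_sigma, Finset.mem_product, Finset.mem_Icc] at hs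
      rw [Sigma.ext_iff]
      simp only [heq_eq_eq, Prod.mk.injEq]
      exact ⟨by omega, by omega, trivial⟩
  rw [hcard, Finset.card_sigma]
  simp only [Finset.card_product, Nat.card_Icc, Nat.add_sub_cancel]
  rw [sq_sum_choose m, hm]
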